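/- Let ℓ be a prime and let 𝒢 = ⟨σ, τ : τ^{ℓ²} = 1, σ^ℓ = τ^{cℓ}, στσ⁻¹ = τ^{1+aℓ}⟩ for integers a, c. Let G be a group, H ◁ G abelian, and τ₀ ∈ G of order ℓ², σ₀ ∈ G centralizing H with σ₀τ₀σ₀⁻¹ = τ₀^{1+aℓ}, σ₀^ℓ = τ₀^{cℓ}. Suppose h₀ ∈ H satisfies (h₀τ₀)^ℓ = 1. Then for every integer j, the assignments τ ↦ h₀^j τ₀, σ ↦ σ₀^{1−j}, extending by the identity on H, define a group homomorphism from H ⋊ 𝒢 to G (respecting all the defining relations: σ-conjugation acts trivially on H, τ-conjugation acts as τ₀-conjugation on H, (h₀^j τ₀) is conjugated by σ₀^{1−j} to its (1+aℓ)-th power, σ₀^{(1−j)ℓ} = (h₀^j τ₀)^{cℓ}, and (h₀^j τ₀)^{ℓ²} = 1). -/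

import Mathlib

private def auxF {G : Type*} [Group G] (τ₀ : G) : ℕ → G → G
  | 0, _ => 1
  | n+1, h => h * (τ₀ * auxF τ₀ n h * τ₀⁻¹)

private lemma auxF_spec {G : Type*} [Group G] (τ₀ : G) (n : ℕ) (h : G) :
    (h * τ₀) ^ n = auxF τ₀ n h * τ₀ ^ n := by
  induction n with
  | zero => simp [auxF]
  | succ n ih =>
    rw [pow_succ', ih, auxF, pow_succ']
    group

private lemma auxF_mem {G : Type*} [Group G] (H : Subgroup G) [hN : H.Normal] (τ₀ : G)
    (n : ℕ) (h : G) (hh : h ∈ H) : auxF τ₀ n h ∈ H := by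
  induction n with
  | zero => simpa [auxF] using H.one_mem
  | succ n ih => exact H.mul_mem hh (hN.conj_mem _ ih τ₀)

private lemma auxF_mul {G : Type*} [Group G] (H : Subgroup G) [hN : H.Normal]
    (hab : ∀ x ∈ H, ∀ y ∈ H, x * y = y * x) (τ₀ : G) (n : ℕ)
    (h h' : G) (hh : h ∈ H) (hh' : h' ∈ H) :
    auxF τ₀ n (h * h') = auxF τ₀ n h * auxF τ₀ n h' := by
  induction n with
  | zero => simp [auxF]
  | succ n ih =>
    have key : h' * (τ₀ * auxF τ₀ n h * τ₀⁻¹) = (τ₀ * auxF τ₀ n h * τ₀⁻¹) * h' :=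
      hab _ hh' _ (hN.conj_mem _ (auxF_mem H τ₀ n h hh) τ₀)
    simp only [auxF, ih]
    calc h * h' * (τ₀ * (auxF τ₀ n h * auxF τ₀ n h') * τ₀⁻¹)
        = h * ((h' * (τ₀ * auxF τ₀ n h * τ₀⁻¹)) * (τ₀ * auxF τ₀ n h' * τ₀⁻¹)) := by group
      _ = h * (((τ₀ * auxF τ₀ n h * τ₀⁻¹) * h') * (τ₀ * auxF τ₀ n h' * τ₀⁻¹)) := by rw [key]
      _ = h * (τ₀ * auxF τ₀ n h * τ₀⁻¹) * (h' * (τ₀ * auxF τ₀ n h' * τ₀⁻¹)) := by group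

private lemma auxF_one {G : Type*} [Group G] (τ₀ : G) (n : ℕ) : auxF τ₀ n 1 = 1 := by
  induction n with
  | zero => rfl
  | succ n ih => simp [auxF, ih]

theorem stmt19 {G : Type*} [Group G] (H : Subgroup G) [H.Normal]
    (hab : ∀ x ∈ H, ∀ y ∈ H, x * y = y * x)
    (ℓ : ℕ) (hℓ : ℓ.Prime) (a c : ℤ)
    (τ₀ σ₀ : G) (hτ₀ : orderOf τ₀ = ℓ ^ 2)
    (hσ₀H : ∀ h ∈ H, σ₀ * h * σ₀⁻¹ = h)
    (hconj : σ₀ * τ₀ * σ₀⁻¹ = τ₀ ^ (1 + a * ℓ))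
    (hσ₀ℓ : σ₀ ^ (ℓ : ℤ) = τ₀ ^ (c * ℓ))
    (h₀ : G) (hh₀ : h₀ ∈ H) (hpow : (h₀ * τ₀) ^ ℓ = 1) :
    ∀ j : ℤ,
      (∀ h ∈ H, (σ₀ ^ (1 - j)) * h * (σ₀ ^ (1 - j))⁻¹ = h) ∧
      (∀ h ∈ H, (h₀ ^ j * τ₀) * h * (h₀ ^ j * τ₀)⁻¹ = τ₀ * h * τ₀⁻¹) ∧
      (σ₀ ^ (1 - j)) * (h₀ ^ j * τ₀) * (σ₀ ^ (1 - j))⁻¹ = (h₀ ^ j * τ₀) ^ (1 + a * ℓ) ∧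
      (σ₀ ^ (1 - j)) ^ (ℓ : ℤ) = (h₀ ^ j * τ₀) ^ (c * ℓ) ∧
      (h₀ ^ j * τ₀) ^ ((ℓ : ℤ) ^ 2) = 1 := by
  have hN : H.Normal := ‹H.Normal›
  -- τ₀ ^ (ℓ²) = 1 (as an integer power)
  have hτsq : τ₀ ^ ((ℓ:ℤ) ^ 2) = 1 := by
    have h1 := pow_orderOf_eq_one τ₀
    rw [hτ₀] at h1
    rw [show ((ℓ:ℤ) ^ 2) = ((ℓ ^ 2 : ℕ) : ℤ) by push_cast; ring, zpow_natCast, h1]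
  -- σ₀ commutes with elements of H
  have hcom : ∀ h ∈ H, Commute σ₀ h := by
    intro h hh
    have : σ₀ * h = (σ₀ * h * σ₀⁻¹) * σ₀ := by group
    rw [hσ₀H h hh] at this
    exact this
  -- σ₀ commutes with τ₀ ^ ℓ
  have tcomm : Commute σ₀ (τ₀ ^ (ℓ:ℤ)) := by
    have h1 : σ₀ * τ₀ ^ (ℓ:ℤ) * σ₀⁻¹ = (σ₀ * τ₀ * σ₀⁻¹) ^ (ℓ:ℤ) := by
      rw [← MulAut.conj_apply, map_zpow, MulAut.conj_apply]
    have h2 : σ₀ * τ₀ ^ (ℓ:ℤ) * σ₀⁻¹ = τ₀ ^ (ℓ:ℤ) := by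
      rw [h1, hconj, ← zpow_mul,
        show (1 + a * (ℓ:ℤ)) * (ℓ:ℤ) = (ℓ:ℤ) + ((ℓ:ℤ)^2) * a by ring,
        zpow_add, zpow_mul, hτsq, one_zpow, mul_one]
    have : σ₀ * τ₀ ^ (ℓ:ℤ) = τ₀ ^ (ℓ:ℤ) * σ₀ := by
      conv_rhs => rw [← h2]
      group
    exact this
  have tcomm' : ∀ m : ℤ, σ₀ * (τ₀ ^ (ℓ:ℤ)) ^ m * σ₀⁻¹ = (τ₀ ^ (ℓ:ℤ)) ^ m := by
    intro m
    rw [(tcomm.zpow_right m).eq]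
    group
  have conjσ : ∀ x y : G, σ₀ * x * σ₀⁻¹ = σ₀ * y * σ₀⁻¹ → x = y := by
    intro x y hxy
    exact mul_left_cancel (mul_right_cancel hxy)
  have conj1 : σ₀ * τ₀ * σ₀⁻¹ = τ₀ * (τ₀ ^ (ℓ:ℤ)) ^ a := by
    rw [hconj, zpow_add, zpow_one, show a * (ℓ:ℤ) = (ℓ:ℤ) * a from mul_comm _ _, zpow_mul]
  -- conjugation of τ₀ by powers of σ₀
  have conjk : ∀ k : ℤ, σ₀ ^ k * τ₀ * (σ₀ ^ k)⁻¹ = τ₀ * (τ₀ ^ (ℓ:ℤ)) ^ (a * k) := by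
    intro k
    induction k using Int.induction_on with
    | zero => simp
    | succ k ih =>
      calc σ₀ ^ ((k:ℤ)+1) * τ₀ * (σ₀ ^ ((k:ℤ)+1))⁻¹
          = σ₀ * (σ₀ ^ (k:ℤ) * τ₀ * (σ₀ ^ (k:ℤ))⁻¹) * σ₀⁻¹ := by group
        _ = σ₀ * (τ₀ * (τ₀ ^ (ℓ:ℤ)) ^ (a * k)) * σ₀⁻¹ := by rw [ih]
        _ = (σ₀ * τ₀ * σ₀⁻¹) * (σ₀ * (τ₀ ^ (ℓ:ℤ)) ^ (a * k) * σ₀⁻¹) := by group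
        _ = (τ₀ * (τ₀ ^ (ℓ:ℤ)) ^ a) * (τ₀ ^ (ℓ:ℤ)) ^ (a * k) := by rw [conj1, tcomm']
        _ = τ₀ * (τ₀ ^ (ℓ:ℤ)) ^ (a * ((k:ℤ)+1)) := by
              rw [mul_assoc, ← zpow_add, show a + a * (k:ℤ) = a * ((k:ℤ)+1) by ring]
    | pred k ih =>
      apply conjσ
      calc σ₀ * (σ₀ ^ (-(k:ℤ)-1) * τ₀ * (σ₀ ^ (-(k:ℤ)-1))⁻¹) * σ₀⁻¹
          = σ₀ ^ (-(k:ℤ)) * τ₀ * (σ₀ ^ (-(k:ℤ)))⁻¹ := by group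
        _ = τ₀ * (τ₀ ^ (ℓ:ℤ)) ^ (a * (-(k:ℤ))) := ih
        _ = (σ₀ * τ₀ * σ₀⁻¹) * (σ₀ * (τ₀ ^ (ℓ:ℤ)) ^ (a * (-(k:ℤ)-1)) * σ₀⁻¹) := by
              rw [conj1, tcomm', mul_assoc, ← zpow_add,
                show a + a * (-(k:ℤ)-1) = a * (-(k:ℤ)) by ring]
        _ = σ₀ * (τ₀ * (τ₀ ^ (ℓ:ℤ)) ^ (a * (-(k:ℤ)-1))) * σ₀⁻¹ := by group
  -- the value of auxF at h₀
  have hF : auxF τ₀ ℓ h₀ = (τ₀ ^ ℓ)⁻¹ := by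
    have h1 := auxF_spec τ₀ ℓ h₀
    rw [hpow] at h1
    exact eq_inv_of_mul_eq_one_left h1.symm
  have hFinv : auxF τ₀ ℓ h₀⁻¹ = τ₀ ^ ℓ := by
    have h1 := auxF_mul H hab τ₀ ℓ h₀ h₀⁻¹ hh₀ (inv_mem hh₀)
    rw [mul_inv_cancel, auxF_one, hF] at h1
    have h2 := eq_inv_of_mul_eq_one_right h1.symm
    rw [h2, inv_inv]
  have hFz : ∀ j : ℤ, auxF τ₀ ℓ (h₀ ^ j) = ((τ₀ ^ ℓ)⁻¹) ^ j := by
    intro j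
    induction j using Int.induction_on with
    | zero => simpa using auxF_one τ₀ ℓ
    | succ k ih =>
      rw [show h₀ ^ ((k:ℤ)+1) = h₀ ^ (k:ℤ) * h₀ from zpow_add_one h₀ k,
        auxF_mul H hab τ₀ ℓ _ _ (zpow_mem hh₀ _) hh₀, ih, hF, ← zpow_add_one]
    | pred k ih =>
      rw [show h₀ ^ (-(k:ℤ)-1) = h₀ ^ (-(k:ℤ)) * h₀⁻¹ from zpow_sub_one h₀ _,
        auxF_mul H hab τ₀ ℓ _ _ (zpow_mem hh₀ _) (inv_mem hh₀), ih, hFinv,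
        zpow_sub_one, inv_inv]
  -- the key formula : (h₀^j τ₀)^ℓ = τ₀^((1-j)ℓ)
  have key : ∀ j : ℤ, (h₀ ^ j * τ₀) ^ (ℓ:ℤ) = τ₀ ^ ((1-j) * (ℓ:ℤ)) := by
    intro j
    rw [zpow_natCast, auxF_spec τ₀ ℓ (h₀ ^ j), hFz j, ← zpow_natCast τ₀ ℓ,
      ← zpow_neg, ← zpow_mul, ← zpow_add,
      show (-(ℓ:ℤ)) * j + (ℓ:ℤ) = (1-j) * (ℓ:ℤ) by ring]
  intro j
  refine ⟨?_, ?_, ?_, ?_, ?_⟩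
  · -- σ₀^(1-j) centralizes H
    intro h hh
    rw [(((hcom h hh).zpow_left (1-j)).eq)]
    group
  · -- conjugation by h₀^j τ₀ equals conjugation by τ₀ on H
    intro h hh
    have c1 : h₀ ^ j * (τ₀ * h * τ₀⁻¹) = (τ₀ * h * τ₀⁻¹) * h₀ ^ j :=
      hab _ (zpow_mem hh₀ j) _ (hN.conj_mem h hh τ₀)
    calc (h₀ ^ j * τ₀) * h * (h₀ ^ j * τ₀)⁻¹
        = h₀ ^ j * (τ₀ * h * τ₀⁻¹) * (h₀ ^ j)⁻¹ := by group
      _ = (τ₀ * h * τ₀⁻¹) * h₀ ^ j * (h₀ ^ j)⁻¹ := by rw [c1]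
      _ = τ₀ * h * τ₀⁻¹ := by group
  · -- the main conjugation relation
    have hH : σ₀ ^ (1-j) * h₀ ^ j * (σ₀ ^ (1-j))⁻¹ = h₀ ^ j := by
      rw [(((hcom h₀ hh₀).zpow_right j).zpow_left (1-j)).eq]
      group
    have rhs : (h₀ ^ j * τ₀) ^ (1 + a * (ℓ:ℤ)) = h₀ ^ j * (τ₀ * (τ₀ ^ (ℓ:ℤ)) ^ (a * (1-j))) := by
      rw [zpow_add, zpow_one, show a * (ℓ:ℤ) = (ℓ:ℤ) * a from mul_comm _ _,
        zpow_mul, key j, ← zpow_mul, ← zpow_mul,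
        show (1-j) * (ℓ:ℤ) * a = (ℓ:ℤ) * (a * (1-j)) by ring, zpow_mul, mul_assoc]
    rw [rhs]
    calc σ₀ ^ (1-j) * (h₀ ^ j * τ₀) * (σ₀ ^ (1-j))⁻¹
        = (σ₀ ^ (1-j) * h₀ ^ j * (σ₀ ^ (1-j))⁻¹) * (σ₀ ^ (1-j) * τ₀ * (σ₀ ^ (1-j))⁻¹) := by
            group
      _ = h₀ ^ j * (τ₀ * (τ₀ ^ (ℓ:ℤ)) ^ (a * (1-j))) := by rw [hH, conjk (1-j)]
  · -- the ℓ-th power relation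
    rw [← zpow_mul, show (1-j) * (ℓ:ℤ) = (ℓ:ℤ) * (1-j) from mul_comm _ _, zpow_mul, hσ₀ℓ,
      ← zpow_mul, show c * (ℓ:ℤ) = (ℓ:ℤ) * c from mul_comm _ _,
      zpow_mul (h₀ ^ j * τ₀), key j, ← zpow_mul]
    congr 1; ring
  · -- order relation
    rw [show ((ℓ:ℤ) ^ 2) = (ℓ:ℤ) * (ℓ:ℤ) from sq (ℓ:ℤ), zpow_mul, key j, ← zpow_mul,
      show (1-j) * (ℓ:ℤ) * (ℓ:ℤ) = ((ℓ:ℤ)^2) * (1-j) by ring, zpow_mul, hτsq, one_zpow]
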